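/- Let x₁,…,xₙ ∈ ℝᵈ and let K ⊆ ℝᵈ denote their convex hull. For any β > 0 and any positive constants c₁,…,cₙ > 0, the map F : ℝᵈ → ℝᵈ defined by F(ψ) = (Σᵢ xᵢ·(1/cᵢ)·exp(−‖xᵢ − ψ‖²/(2β))) / (Σᵢ (1/cᵢ)·exp(−‖xᵢ − ψ‖²/(2β))) maps ℝᵈ into K and is continuous; hence by Brouwer's fixed-point theorem F has a fixed point in K. -/

import Mathlib

open Set

open scoped RealInnerProductSpace

/-- **β-VAE reconstruction map has a fixed point in the convex hull of the data.**
The normalized-Gaussian-weighted mean map `F` sends `ℝᵈ` into the convex hull `K` of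
the data points, is continuous, and (by Brouwer's fixed-point theorem) has a fixed
point in `K`. -/
theorem reconstruction_map_fixed_point
    (d n : ℕ) (hn : 0 < n) (x : Fin n → EuclideanSpace ℝ (Fin d))
    (β : ℝ) (hβ : 0 < β) (c : Fin n → ℝ) (hc : ∀ i, 0 < c i)
    (F : EuclideanSpace ℝ (Fin d) → EuclideanSpace ℝ (Fin d))
    (hF : ∀ ψ, F ψ =
      (∑ i, (1 / c i) * Real.exp (-‖x i - ψ‖ ^ 2 / (2 * β)))⁻¹ •
        ∑ i, ((1 / c i) * Real.exp (-‖x i - ψ‖ ^ 2 / (2 * β))) • x i) :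
    (∀ ψ, F ψ ∈ convexHull ℝ (Set.range x)) ∧ Continuous F ∧
      ∃ ψ ∈ convexHull ℝ (Set.range x), F ψ = ψ := by
  set w : EuclideanSpace ℝ (Fin d) → Fin n → ℝ :=
    fun ψ i => (1 / c i) * Real.exp (-‖x i - ψ‖ ^ 2 / (2 * β)) with hw_def
  have hwpos : ∀ ψ i, 0 < w ψ i := fun ψ i => by
    have := hc i
    positivity
  have hsumpos : ∀ ψ, 0 < ∑ i, w ψ i := fun ψ =>
    Finset.sum_pos (fun i _ => hwpos ψ i) ⟨⟨0, hn⟩, Finset.mem_univ _⟩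
  -- Part 1: F maps into the convex hull
  have hmem : ∀ ψ, F ψ ∈ convexHull ℝ (Set.range x) := by
    intro ψ
    have h := Finset.centerMass_mem_convexHull (Finset.univ : Finset (Fin n))
      (w := w ψ) (z := x) (fun i _ => (hwpos ψ i).le) (hsumpos ψ)
      (fun i _ => Set.mem_range_self i)
    rw [hF ψ]
    simpa [Finset.centerMass, hw_def] using h
  -- Continuity of each weight and of F
  have hcw : ∀ i, Continuous fun ψ : EuclideanSpace ℝ (Fin d) => w ψ i := by
    intro i
    apply Continuous.mul continuous_const
    apply Real.continuous_exp.comp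
    exact ((((continuous_const.sub continuous_id).norm.pow 2).neg).div_const _)
  have hcsum : Continuous fun ψ : EuclideanSpace ℝ (Fin d) => ∑ i, w ψ i :=
    continuous_finset_sum _ fun i _ => hcw i
  have hcF : Continuous F := by
    have : F = fun ψ => (∑ i, w ψ i)⁻¹ • ∑ i, (w ψ i) • x i := funext hF
    rw [this]
    exact (hcsum.inv₀ fun ψ => (hsumpos ψ).ne').smul
      (continuous_finset_sum _ fun i _ => (hcw i).smul continuous_const)
  refine ⟨hmem, hcF, ?_⟩
  -- Part 3: existence of a fixed point, by maximizing g ψ = ∑ i, w ψ i.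
  set g : EuclideanSpace ℝ (Fin d) → ℝ := fun ψ => ∑ i, w ψ i with hg_def
  -- g tends to 0 at infinity
  have hg0 : Filter.Tendsto g (Filter.cocompact (EuclideanSpace ℝ (Fin d))) (nhds 0) := by
    have : Filter.Tendsto g (Filter.cocompact (EuclideanSpace ℝ (Fin d))) (nhds (∑ i : Fin n, (0 : ℝ))) := by
      apply tendsto_finset_sum
      intro i _
      have h1 : Filter.Tendsto (fun ψ : EuclideanSpace ℝ (Fin d) => ‖x i - ψ‖) (Filter.cocompact (EuclideanSpace ℝ (Fin d))) Filter.atTop := by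
        apply Filter.tendsto_atTop_mono (fun ψ : EuclideanSpace ℝ (Fin d) => ?_)
          (Filter.tendsto_atTop_add_const_right _ (-‖x i‖) tendsto_norm_cocompact_atTop)
        calc ‖ψ‖ + -‖x i‖ = ‖ψ‖ - ‖x i‖ := by ring
        _ ≤ ‖ψ - x i‖ := norm_sub_norm_le _ _
        _ = ‖x i - ψ‖ := (norm_sub_rev _ _)
      have h2 : Filter.Tendsto (fun ψ : EuclideanSpace ℝ (Fin d) => -‖x i - ψ‖ ^ 2 / (2 * β))
          (Filter.cocompact (EuclideanSpace ℝ (Fin d))) Filter.atBot := by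
        have hp : Filter.Tendsto (fun ψ : EuclideanSpace ℝ (Fin d) => ‖x i - ψ‖ ^ 2 / (2 * β))
            (Filter.cocompact (EuclideanSpace ℝ (Fin d))) Filter.atTop :=
          (((Filter.tendsto_pow_atTop (two_ne_zero)).comp h1).atTop_div_const (by linarith))
        exact (Filter.tendsto_neg_atTop_atBot.comp hp).congr fun ψ => (neg_div _ _).symm
      have := (Real.tendsto_exp_atBot.comp h2).const_mul (1 / c i)
      simpa [Function.comp, hw_def] using this
    simpa using this
  -- g attains a global maximum
  obtain ⟨ψ₀, hψ₀⟩ : ∃ ψ₀ : EuclideanSpace ℝ (Fin d), ∀ ψ, g ψ ≤ g ψ₀ := by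
    set i₀ : Fin n := ⟨0, hn⟩
    have hlb : 0 < g (x i₀) := hsumpos _
    apply hcsum.exists_forall_ge' (x i₀)
    filter_upwards [hg0.eventually_lt_const hlb] with ψ hψ using hψ.le
  -- At the maximum, all directional derivatives of g vanish.
  have hkey : ∀ v : EuclideanSpace ℝ (Fin d), ∑ i, w ψ₀ i * ⟪x i - ψ₀, v⟫ = 0 := by
    intro v
    -- the one-variable function t ↦ g (ψ₀ + t • v)
    have hderiv : ∀ i : Fin n, HasDerivAt (fun t : ℝ => w (ψ₀ + t • v) i)
        (w ψ₀ i * ((2 * ⟪x i - ψ₀, -v⟫) / (2 * β)) * (-1)) 0 := by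
      intro i
      have hf : HasDerivAt (fun t : ℝ => (x i - ψ₀) - t • v) (-v) 0 := by
        simpa using ((hasDerivAt_id (0 : ℝ)).smul_const v).const_sub (x i - ψ₀)
      have hq := hf.norm_sq
      have hq' : HasDerivAt (fun t : ℝ => -‖(x i - ψ₀) - t • v‖ ^ 2 / (2 * β))
          (-(2 * ⟪(x i - ψ₀) - (0:ℝ) • v, -v⟫) / (2 * β)) 0 := hq.neg.div_const _
      have he := hq'.exp.const_mul (1 / c i)
      have he' : HasDerivAt (fun t : ℝ => (1 / c i) * Real.exp (-‖(x i - ψ₀) - t • v‖ ^ 2 / (2 * β)))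
          (w ψ₀ i * ((2 * ⟪x i - ψ₀, -v⟫) / (2 * β)) * (-1)) 0 := by
        refine he.congr_deriv ?_
        simp only [hw_def, zero_smul, sub_zero]
        ring
      exact he'.congr_of_eventuallyEq (Filter.Eventually.of_forall fun t => by
        simp only [hw_def, sub_add_eq_sub_sub])
    have hsum : HasDerivAt (fun t : ℝ => g (ψ₀ + t • v))
        (∑ i, w ψ₀ i * ((2 * ⟪x i - ψ₀, -v⟫) / (2 * β)) * (-1)) 0 :=
      HasDerivAt.fun_sum fun i _ => hderiv i
    have hmax : IsLocalMax (fun t : ℝ => g (ψ₀ + t • v)) 0 :=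
      Filter.Eventually.of_forall fun t => by
        simpa using hψ₀ (ψ₀ + t • v)
    have hz := hmax.hasDerivAt_eq_zero hsum
    have hβ' : (β : ℝ) ≠ 0 := hβ.ne'
    have : ∑ i, w ψ₀ i * ((2 * ⟪x i - ψ₀, -v⟫) / (2 * β)) * (-1)
        = (1 / β) * ∑ i, w ψ₀ i * ⟪x i - ψ₀, v⟫ := by
      rw [Finset.mul_sum]
      apply Finset.sum_congr rfl
      intro i _
      rw [inner_neg_right]
      field_simp
    rw [this] at hz
    rcases mul_eq_zero.mp hz with h | h
    · exact absurd h (by positivity)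
    · exact h
  -- conclude ∑ wᵢ • (xᵢ - ψ₀) = 0
  have hS : (∑ i, w ψ₀ i • (x i - ψ₀)) = 0 := by
    set S : EuclideanSpace ℝ (Fin d) := ∑ i, w ψ₀ i • (x i - ψ₀) with hS_def
    have : ⟪S, S⟫ = 0 := by
      have h1 : ⟪S, S⟫ = ∑ i, w ψ₀ i * ⟪x i - ψ₀, S⟫ := by
        rw [hS_def, sum_inner]
        exact Finset.sum_congr rfl fun i _ => real_inner_smul_left _ _ _
      rw [h1, hkey S]
    exact inner_self_eq_zero.mp this
  have hfix : F ψ₀ = ψ₀ := by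
    have hsx : (∑ i, w ψ₀ i • x i) = (∑ i, w ψ₀ i) • ψ₀ := by
      have heq : (∑ i, w ψ₀ i • (x i - ψ₀)) = (∑ i, w ψ₀ i • x i) - (∑ i, w ψ₀ i) • ψ₀ := by
        rw [Finset.sum_smul, ← Finset.sum_sub_distrib]
        exact Finset.sum_congr rfl fun i _ => smul_sub _ _ _
      rw [heq] at hS
      exact sub_eq_zero.mp hS
    rw [hF ψ₀, hsx, smul_smul, inv_mul_cancel₀ (hsumpos ψ₀).ne', one_smul]
  exact ⟨ψ₀, hfix ▸ hmem ψ₀, hfix⟩
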